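/- In the cycle prefix digraph Γ_Δ(D), the directed distance from a vertex X to a vertex Y equals the length of the shortest header of Y with respect to X, i.e., the minimum k such that y_{k+1}⋯y_D is a tail of Y with respect to X. -/

import Mathlib

/-- `l` is a vertex of the cycle prefix digraph `Γ_Δ(D)`: a sequence of `D`
distinct letters from the alphabet `{1, …, Δ+1}`. -/
def IsVtx (Δ D : ℕ) (l : List ℕ) : Prop :=
  l.length = D ∧ l.Nodup ∧ ∀ x ∈ l, 1 ≤ x ∧ x ≤ Δ + 1

/-- Adjacency in `Γ_Δ(D, -r)` (for `r = 0` this is `Γ_Δ(D)` itself): arcs are the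
rotations `R_k` for `r+2 ≤ k ≤ D` (0-indexed: move the letter at index `j`,
`r+1 ≤ j ≤ D-1`, to the front) and the shifts `S_y` for letters `y` not in the
sequence. -/
def adjR (Δ D r : ℕ) (X Y : List ℕ) : Prop :=
  IsVtx Δ D X ∧ IsVtx Δ D Y ∧
    ((∃ j, r + 1 ≤ j ∧ j < D ∧ Y = X.getD j 0 :: X.eraseIdx j) ∨
     (∃ y, y ∉ X ∧ Y = y :: X.dropLast))

/-- `w` is a directed walk of length `n` from `u` to `v` in the digraph with
adjacency relation `A`. -/
def IsWalk {V : Type*} (A : V → V → Prop) (u v : V) (n : ℕ) (w : ℕ → V) : Prop :=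
  w 0 = u ∧ w n = v ∧ ∀ i < n, A (w i) (w (i + 1))

/-- Directed distance: the least length of a directed walk from `u` to `v`. -/
noncomputable def cpDist {V : Type*} (A : V → V → Prop) (u v : V) : ℕ :=
  sInf {n | ∃ w, IsWalk A u v n w}

/-- `y_{k+1} ⋯ y_D` (i.e. `Y.drop k`) is a tail of `Y` with respect to `X`: it
occurs as a subsequence of `X` ending at some position `m`, all of whose
preceding letters of `X` occur in `Y`. -/
def IsTail (X Y : List ℕ) (k : ℕ) : Prop :=
  ∃ m ≤ X.length, (Y.drop k).Sublist (X.take m) ∧ ∀ x ∈ X.take m, x ∈ Y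

namespace CPAux
open List

lemma tail_sublist_tail {α : Type*} {l₁ l₂ : List α} (h : l₁ <+ l₂) : l₁.tail <+ l₂.tail := by
  induction h with
  | slnil => simp
  | cons a h ih => exact (List.tail_sublist _).trans h
  | cons_cons a h ih => exact h

lemma sublist_of_cons_of_not_mem {α : Type*} {a : α} {l L : List α}
    (ha : a ∉ l) (h : l <+ a :: L) : l <+ L := by
  cases h with
  | cons _ h => exact h
  | cons_cons _ h => exact absurd List.mem_cons_self ha

lemma sublist_erase_of_not_mem {a : ℕ} {l : List ℕ} :
    ∀ {L : List ℕ}, a ∉ l → l <+ L → l <+ L.erase a := by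
  intro L
  induction L generalizing l with
  | nil => intro _ h; simpa using h
  | cons b T ih =>
    intro ha h
    by_cases hb : b = a
    · subst hb
      rw [List.erase_cons_head]
      exact sublist_of_cons_of_not_mem ha h
    · rw [List.erase_cons_tail (by simpa using hb)]
      cases h with
      | cons _ h => exact (ih ha h).trans (List.sublist_cons_self _ _)
      | cons_cons _ h => exact (ih (fun hm => ha (List.mem_cons_of_mem _ hm)) h).cons₂ _

lemma take_eraseIdx_of_le : ∀ (X : List ℕ) (j n : ℕ), n ≤ j →
    (X.eraseIdx j).take n = X.take n := by
  intro X
  induction X with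
  | nil => simp
  | cons x T ih =>
    intro j n hnj
    cases j with
    | zero => interval_cases n; simp
    | succ j' =>
      cases n with
      | zero => simp
      | succ n' =>
        simp only [List.eraseIdx_cons_succ, List.take_succ_cons]
        rw [ih j' n' (by omega)]

lemma take_eraseIdx_sublist : ∀ (X : List ℕ) (j n : ℕ),
    (X.eraseIdx j).take n <+ X.take (n + 1) := by
  intro X
  induction X with
  | nil => simp
  | cons x T ih =>
    intro j n
    cases j with
    | zero =>
      simp only [List.eraseIdx_cons_zero, List.take_succ_cons]
      exact List.sublist_cons_self _ _
    | succ j' =>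
      cases n with
      | zero => simp
      | succ n' =>
        simp only [List.eraseIdx_cons_succ, List.take_succ_cons]
        exact (ih j' n').cons₂ _

lemma mem_take_eraseIdx : ∀ (X : List ℕ) (j n : ℕ), j < X.length → j ≤ n →
    ∀ x ∈ X.take (n + 1), x = X.getD j 0 ∨ x ∈ (X.eraseIdx j).take n := by
  intro X
  induction X with
  | nil => simp
  | cons c T ih =>
    intro j n hjl hjn x hx
    cases j with
    | zero =>
      simp only [List.take_succ_cons, List.mem_cons] at hx
      simpa using hx
    | succ j' =>
      cases n with
      | zero => omega
      | succ n' =>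
        simp only [List.take_succ_cons, List.mem_cons] at hx
        rcases hx with rfl | hx
        · right
          simp [List.eraseIdx_cons_succ, List.take_succ_cons]
        · rcases ih j' n' (by simpa using hjl) (by omega) x hx with h | h
          · left; simpa using h
          · right
            simp only [List.eraseIdx_cons_succ, List.take_succ_cons, List.mem_cons]
            exact Or.inr h

lemma take_erase_of_not_mem : ∀ (X : List ℕ) (m : ℕ) {a : ℕ}, a ∉ X.take m →
    (X.erase a).take m = X.take m := by
  intro X
  induction X with
  | nil => simp
  | cons x T ih =>
    intro m a ha
    cases m with
    | zero => simp
    | succ m' =>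
      simp only [List.take_succ_cons, List.mem_cons, not_or] at ha
      rw [List.erase_cons_tail (by simp; exact fun h => ha.1 h.symm)]
      simp [ih m' ha.2]

lemma take_erase_of_mem : ∀ (X : List ℕ) (m : ℕ) {a : ℕ}, a ∈ X.take m →
    (X.take m).erase a = (X.erase a).take (m - 1) := by
  intro X
  induction X with
  | nil => simp
  | cons x T ih =>
    intro m a ha
    cases m with
    | zero => simp at ha
    | succ m' =>
      by_cases hx : x = a
      · subst hx
        simp [List.take_succ_cons, List.erase_cons_head]
      · simp only [List.take_succ_cons, List.mem_cons] at ha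
        rcases ha with h | ha
        · exact absurd h.symm hx
        · have hm' : m' ≠ 0 := by
            rintro rfl; simp at ha
          obtain ⟨m'', rfl⟩ : ∃ m'', m' = m'' + 1 := ⟨m' - 1, by omega⟩
          rw [List.take_succ_cons, List.erase_cons_tail (by simpa using hx),
            List.erase_cons_tail (by simpa using hx)]
          simp only [Nat.add_sub_cancel, List.take_succ_cons]
          rw [ih (m'' + 1) ha]
          simp

/-- One arc increases the tail index by at most one. -/
lemma tail_step {Δ D : ℕ} {X X' Y : List ℕ} (hadj : adjR Δ D 0 X X') {k : ℕ}
    (h : IsTail X' Y k) : IsTail X Y (k + 1) := by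
  obtain ⟨hvX, hvX', hc⟩ := hadj
  obtain ⟨m, hm, hsub, hmem⟩ := h
  have hlenX : X.length = D := hvX.1
  have hlenX' : X'.length = D := hvX'.1
  have htail : (Y.drop (k + 1)) <+ (X'.take m).tail := by
    rw [← List.tail_drop]
    exact tail_sublist_tail hsub
  cases m with
  | zero =>
    exact ⟨0, Nat.zero_le _, by simpa using htail, by simp⟩
  | succ m' =>
    have hm' : m' + 1 ≤ D := hlenX' ▸ hm
    rcases hc with ⟨j, hj1, hj2, rfl⟩ | ⟨y, hy, rfl⟩
    · -- rotation
      rw [List.take_succ_cons] at htail hmem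
      simp only [List.tail_cons] at htail
      by_cases hmj : m' ≤ j
      · rw [take_eraseIdx_of_le X j m' hmj] at htail
        refine ⟨m', by omega, htail, fun x hx => ?_⟩
        apply hmem
        rw [← take_eraseIdx_of_le X j m' hmj] at hx
        exact List.mem_cons_of_mem _ hx
      · refine ⟨m' + 1, by omega, htail.trans (take_eraseIdx_sublist X j m'), fun x hx => ?_⟩
        rcases mem_take_eraseIdx X j m' (by omega) (by omega) x hx with h | h
        · exact hmem _ (h ▸ List.mem_cons_self)
        · exact hmem _ (List.mem_cons_of_mem _ h)
    · -- shift
      rw [List.take_succ_cons] at htail hmem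
      simp only [List.tail_cons] at htail
      have hdl : X.dropLast.take m' = X.take m' := by
        rw [List.dropLast_eq_take, List.take_take]
        congr 1
        omega
      rw [hdl] at htail hmem
      exact ⟨m', by omega, htail, fun x hx => hmem _ (List.mem_cons_of_mem _ hx)⟩

lemma walk_tail {Δ D : ℕ} {Y : List ℕ} :
    ∀ (n : ℕ) (X : List ℕ) (w : ℕ → List ℕ), IsWalk (adjR Δ D 0) X Y n w → IsTail X Y n := by
  intro n
  induction n with
  | zero =>
    rintro X w ⟨h0, h1, -⟩
    rw [← h1, h0]
    exact ⟨X.length, le_refl _, by simp, by simp⟩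
  | succ n ih =>
    rintro X w ⟨h0, h1, harc⟩
    have hadj : adjR Δ D 0 X (w 1) := h0 ▸ harc 0 (Nat.succ_pos _)
    have hwalk : IsWalk (adjR Δ D 0) (w 1) Y n (fun i => w (i + 1)) :=
      ⟨rfl, h1, fun i hi => harc (i + 1) (by omega)⟩
    exact tail_step hadj (ih (w 1) _ hwalk)

lemma tail_zero_eq {X Y : List ℕ} (hlen : X.length = Y.length) (h : IsTail X Y 0) : X = Y := by
  obtain ⟨m, hm, hsub, -⟩ := h
  rw [List.drop_zero] at hsub
  have h1 : Y.length ≤ (X.take m).length := hsub.length_le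
  rw [List.length_take] at h1
  have hmge : X.length ≤ m := by omega
  rw [List.take_of_length_le hmge] at hsub
  exact (hsub.eq_of_length hlen.symm).symm

lemma tail_top {X Y : List ℕ} {k : ℕ} (h : Y.length ≤ k) : IsTail X Y k :=
  ⟨0, Nat.zero_le _, by simp [List.drop_eq_nil_of_le h], by simp⟩

/-- One step of the routing algorithm: if the minimal header has positive length `k+1`,
there is an out-neighbour `X'` whose header is at most `k`. -/
lemma exists_step {Δ D : ℕ} (hD : 1 ≤ D) {X Y : List ℕ} (hvX : IsVtx Δ D X)
    (hvY : IsVtx Δ D Y) {k : ℕ} (hk : k < D) (h1 : IsTail X Y (k + 1))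
    (h0 : ¬ IsTail X Y k) : ∃ X', adjR Δ D 0 X X' ∧ IsTail X' Y k := by
  obtain ⟨hlenX, hndX, hrX⟩ := hvX
  obtain ⟨hlenY, hndY, hrY⟩ := hvY
  set a := Y.getD k 0 with hadef
  have hkY : k < Y.length := by omega
  have hgd : Y.getD k 0 = Y[k] := List.getD_eq_getElem Y 0 hkY
  have ha : a ∈ Y := by rw [hadef, hgd]; exact List.getElem_mem hkY
  have hdropk : Y.drop k = a :: Y.drop (k + 1) := by
    rw [hadef, hgd]; exact List.drop_eq_getElem_cons hkY
  have hnotm : a ∉ Y.drop (k + 1) := by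
    have hnd : (Y.drop k).Nodup := List.Nodup.sublist (List.drop_sublist k Y) hndY
    rw [hdropk, List.nodup_cons] at hnd
    exact hnd.1
  obtain ⟨m, hm, hsub, hmem⟩ := h1
  by_cases haX : a ∈ X
  · -- a occurs in X : rotation (or contradiction if a is the head of X)
    set j := X.idxOf a with hjdef
    have hjlen : j < X.length := List.idxOf_lt_length_iff.2 haX
    have hgdX : X.getD j 0 = a := by
      rw [List.getD_eq_getElem X 0 hjlen]
      exact List.getElem_idxOf hjlen
    by_cases hj0 : j = 0
    · -- a is the head of X : then already IsTail X Y k, contradiction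
      exfalso
      apply h0
      obtain ⟨x, T, rfl⟩ : ∃ x T, X = x :: T := by
        cases X with
        | nil => simp at hjlen
        | cons x T => exact ⟨x, T, rfl⟩
      have hxa : x = a := by simpa [hj0] using hgdX
      subst hxa
      cases m with
      | zero =>
        have hnil : Y.drop (k + 1) = [] := List.sublist_nil.1 (by simpa using hsub)
        refine ⟨1, by simp, ?_, ?_⟩
        · rw [hdropk, hnil]
          simp
        · intro z hz
          simp only [List.take_succ_cons, List.take_zero, List.mem_singleton] at hz
          exact hz ▸ ha
      | succ m' =>
        rw [List.take_succ_cons] at hsub hmem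
        have hsub' : Y.drop (k + 1) <+ T.take m' := sublist_of_cons_of_not_mem hnotm hsub
        refine ⟨m' + 1, hm, ?_, hmem⟩
        rw [hdropk, List.take_succ_cons]
        exact hsub'.cons₂ _
    · -- rotation by j ≥ 1
      have herase : X.eraseIdx j = X.erase a := by
        rw [hjdef]; exact (List.erase_eq_eraseIdx_of_idxOf rfl).symm
      have hlenE : (X.erase a).length = D - 1 := by
        rw [List.length_erase_of_mem haX, hlenX]
      have hvX' : IsVtx Δ D (a :: X.erase a) := by
        refine ⟨by simp [hlenE]; omega, ?_, ?_⟩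
        · rw [List.nodup_cons]
          exact ⟨fun hmm => ((hndX.mem_erase_iff).1 hmm).1 rfl, hndX.erase a⟩
        · intro x hx
          rcases List.mem_cons.1 hx with rfl | hx
          · exact hrY _ ha
          · exact hrX x (List.erase_subset hx)
      refine ⟨a :: X.erase a, ⟨⟨hlenX, hndX, hrX⟩, hvX', Or.inl ⟨j, by omega, by omega,
        by rw [hgdX, herase]⟩⟩, ?_⟩
      by_cases ham : a ∈ X.take m
      · -- a occurs in the prefix X.take m
        cases m with
        | zero => simp at ham
        | succ m' =>
          have h2 : Y.drop (k + 1) <+ (X.take (m' + 1)).erase a :=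
            sublist_erase_of_not_mem hnotm hsub
          rw [take_erase_of_mem X (m' + 1) ham] at h2
          simp only [Nat.add_sub_cancel] at h2
          refine ⟨m' + 1, ?_, ?_, ?_⟩
          · simp only [List.length_cons, hlenE]; omega
          · rw [hdropk, List.take_succ_cons]
            exact h2.cons₂ _
          · intro x hx
            rw [List.take_succ_cons] at hx
            rcases List.mem_cons.1 hx with rfl | hx
            · exact ha
            · rw [← Nat.add_sub_cancel m' 1, ← take_erase_of_mem X (m' + 1) ham] at hx
              exact hmem _ (List.erase_subset hx)
      · -- a does not occur in the prefix X.take m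
        have hmD : m < D := by
          rcases Nat.lt_or_ge m D with h | h
          · exact h
          · exfalso
            apply ham
            rw [List.take_of_length_le (by omega)]
            exact haX
        refine ⟨m + 1, ?_, ?_, ?_⟩
        · simp only [List.length_cons, hlenE]; omega
        · rw [hdropk, List.take_succ_cons, take_erase_of_not_mem X m ham]
          exact hsub.cons₂ _
        · intro x hx
          rw [List.take_succ_cons, take_erase_of_not_mem X m ham] at hx
          rcases List.mem_cons.1 hx with rfl | hx
          · exact ha
          · exact hmem _ hx
  · -- a does not occur in X : shift
    have hmD : m < D := by
      rcases Nat.lt_or_ge m D with h | h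
      · exact h
      · exfalso
        apply haX
        have hXsub : X ⊆ Y := by
          intro x hx
          apply hmem
          rwa [List.take_of_length_le (by omega)]
        have hsp : X <+~ Y := List.subperm_of_subset hndX hXsub
        have hperm : X ~ Y := hsp.perm_of_length_le (by omega)
        exact hperm.mem_iff.2 ha
    have hvX' : IsVtx Δ D (a :: X.dropLast) := by
      refine ⟨by simp [List.length_dropLast, hlenX]; omega, ?_, ?_⟩
      · rw [List.nodup_cons]
        exact ⟨fun hmm => haX ((List.dropLast_sublist X).subset hmm),
          List.Nodup.sublist (List.dropLast_sublist X) hndX⟩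
      · intro x hx
        rcases List.mem_cons.1 hx with rfl | hx
        · exact hrY _ ha
        · exact hrX x ((List.dropLast_sublist X).subset hx)
    refine ⟨a :: X.dropLast, ⟨⟨hlenX, hndX, hrX⟩, hvX', Or.inr ⟨a, haX, rfl⟩⟩, ?_⟩
    have hdl : X.dropLast.take m = X.take m := by
      rw [List.dropLast_eq_take, List.take_take]
      congr 1
      omega
    refine ⟨m + 1, ?_, ?_, ?_⟩
    · simp only [List.length_cons, List.length_dropLast, hlenX]; omega
    · rw [hdropk, List.take_succ_cons, hdl]
      exact hsub.cons₂ _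
    · intro x hx
      rw [List.take_succ_cons, hdl] at hx
      rcases List.mem_cons.1 hx with rfl | hx
      · exact ha
      · exact hmem _ hx

lemma exists_walk {Δ D : ℕ} (hD : 1 ≤ D) {Y : List ℕ} (hvY : IsVtx Δ D Y) :
    ∀ (k : ℕ) (X : List ℕ), IsVtx Δ D X → IsTail X Y k →
      ∃ n ≤ k, ∃ w, IsWalk (adjR Δ D 0) X Y n w := by
  intro k
  induction k using Nat.strong_induction_on with
  | _ k IH =>
    intro X hvX ht
    have hne : {k' | IsTail X Y k'}.Nonempty := ⟨k, ht⟩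
    have hk0t : IsTail X Y (sInf {k' | IsTail X Y k'}) := Nat.sInf_mem hne
    have hk0le : sInf {k' | IsTail X Y k'} ≤ k := Nat.sInf_le ht
    cases hk0eq : sInf {k' | IsTail X Y k'} with
    | zero =>
      have hXY : X = Y := tail_zero_eq (by rw [hvX.1, hvY.1]) (hk0eq ▸ hk0t)
      exact ⟨0, Nat.zero_le _, fun _ => X, rfl, hXY, fun i hi => absurd hi (by omega)⟩
    | succ k1 =>
      have hnott : ¬ IsTail X Y k1 :=
        Nat.notMem_of_lt_sInf (s := {k' | IsTail X Y k'}) (m := k1) (by omega)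
      have hk1D : k1 < D := by
        have hDmem : D ∈ {k' | IsTail X Y k'} := tail_top (X := X) (le_of_eq hvY.1)
        have hle := Nat.sInf_le hDmem
        omega
      obtain ⟨X', hadj, ht'⟩ := exists_step hD hvX hvY hk1D (hk0eq ▸ hk0t) hnott
      obtain ⟨n, hn, w, h0, h1, harc⟩ := IH k1 (by omega) X' hadj.2.1 ht'
      refine ⟨n + 1, by omega, fun i => if i = 0 then X else w (i - 1), by simp, ?_, ?_⟩
      · simp only [Nat.succ_ne_zero, if_false, Nat.add_sub_cancel]
        exact h1
      · intro i hi
        cases i with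
        | zero => simpa [h0] using hadj
        | succ i' =>
          simpa using harc i' (by omega)

end CPAux

/-- in `Γ_Δ(D)`, the distance from `X` to `Y` is the length of the
shortest header of `Y` with respect to `X`: the least `k` such that the suffix
`y_{k+1} ⋯ y_D` is a tail of `Y` with respect to `X`. -/
theorem dist_eq_shortest_header (Δ D : ℕ) (hD : 1 ≤ D) (hΔ : D ≤ Δ)
    (X Y : List ℕ) (hX : IsVtx Δ D X) (hY : IsVtx Δ D Y) :
    cpDist (adjR Δ D 0) X Y = sInf {k | IsTail X Y k} := by
  have hne : {k | IsTail X Y k}.Nonempty := ⟨D, CPAux.tail_top (le_of_eq hY.1)⟩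
  have hk0 : IsTail X Y (sInf {k | IsTail X Y k}) := Nat.sInf_mem hne
  obtain ⟨n, hn, w, hw⟩ := CPAux.exists_walk hD hY _ X hX hk0
  have hwne : {n | ∃ w, IsWalk (adjR Δ D 0) X Y n w}.Nonempty := ⟨n, w, hw⟩
  apply le_antisymm
  · exact le_trans (Nat.sInf_le ⟨w, hw⟩) hn
  · obtain ⟨w', hw'⟩ := Nat.sInf_mem hwne
    exact Nat.sInf_le (CPAux.walk_tail _ X w' hw')
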